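/- With F the value iteration operator for a mean-payoff game Γ and bound b ∈ ℕ as above, starting from d₀ = 0 and iterating d_{k+1} = F(d_k): for each v ∈ V and k ∈ ℕ, d_k(v) (when finite) equals the minimum amount x ∈ ℕ of initial energy such that Max has a strategy ensuring that in every k-step play from v, for all n ≤ k, x + Σ_{i=0}^{n-1} w(v_i, v_{i+1}) ≥ 0 and no segment of the play of length at most k has weight less than −b. -/

import Mathlib

/-- One value-iteration step for the lower-weak-upper-bound problem. Values
live in `WithTop ℤ` (with `⊤` playing the role of `∞`); `max 0 (d u - w v u)`
is written with addition of `-(w v u)` so that `⊤` absorbs correctly, and the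
result is set to `⊤` whenever the computed value exceeds `b`. -/
noncomputable def viStep {V : Type*} [Fintype V] [DecidableEq V]
    (E : V → V → Prop) [DecidableRel E] (w : V → V → ℤ) (b : ℕ)
    (VMax : Finset V) (hE : ∀ v : V, ∃ u, E v u)
    (d : V → WithTop ℤ) (v : V) : WithTop ℤ :=
  let s : Finset V := Finset.univ.filter (fun u => E v u)
  have hs : s.Nonempty := by
    obtain ⟨u, hu⟩ := hE v
    exact ⟨u, by simp [s, hu]⟩
  let x : WithTop ℤ :=
    if v ∈ VMax then
      s.inf' hs (fun u => max 0 (d u + ((-(w v u) : ℤ) : WithTop ℤ)))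
    else
      s.sup' hs (fun u => max 0 (d u + ((-(w v u) : ℤ) : WithTop ℤ)))
  if x ≤ ((b : ℤ) : WithTop ℤ) then x else ⊤

/-- The value iteration sequence starting from the all-zero vector. -/
noncomputable def viSeq {V : Type*} [Fintype V] [DecidableEq V]
    (E : V → V → Prop) [DecidableRel E] (w : V → V → ℤ) (b : ℕ)
    (VMax : Finset V) (hE : ∀ v : V, ∃ u, E v u) : ℕ → V → WithTop ℤ
  | 0 => fun _ => 0
  | k + 1 => viStep E w b VMax hE (viSeq E w b VMax hE k)

/-- Max has a (history-dependent) strategy ensuring that every `k`-step play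
from `v` keeps `x` plus all prefix sums non-negative and has no segment of
weight below `-b`. -/
def EnsuresSteps {V : Type*} [Fintype V] [DecidableEq V]
    (E : V → V → Prop) (w : V → V → ℤ) (b : ℕ) (VMax : Finset V)
    (k : ℕ) (v : V) (x : ℕ) : Prop :=
  ∃ σ : List V → V,
    (∀ (l : List V) (u : V), l.getLast? = some u → u ∈ VMax → E u (σ l)) ∧
    ∀ p : ℕ → V, p 0 = v → (∀ i < k, E (p i) (p (i + 1))) →
      (∀ i < k, p i ∈ VMax →
        p (i + 1) = σ (List.ofFn (fun j : Fin (i + 1) => p j))) →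
      ((∀ n ≤ k, 0 ≤ (x : ℤ) + ∑ i ∈ Finset.range n, w (p i) (p (i + 1))) ∧
        ∀ n₁ n₂ : ℕ, n₁ < n₂ → n₂ ≤ k →
          -(b : ℤ) ≤ ∑ i ∈ Finset.Ico n₁ n₂, w (p i) (p (i + 1)))

section MPGAux

variable {V : Type*} [Fintype V] [DecidableEq V]
  (E : V → V → Prop) [DecidableRel E] (w : V → V → ℤ) (b : ℕ)
  (VMax : Finset V) (hE : ∀ v : V, ∃ u, E v u)

def EdgeOK (σ : List V → V) : Prop :=
  ∀ (l : List V) (u : V), l.getLast? = some u → u ∈ VMax → E u (σ l)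

def Ensure (σ : List V → V) (k : ℕ) (v : V) (x : ℕ) : Prop :=
  ∀ p : ℕ → V, p 0 = v → (∀ i < k, E (p i) (p (i + 1))) →
    (∀ i < k, p i ∈ VMax →
      p (i + 1) = σ (List.ofFn (fun j : Fin (i + 1) => p j))) →
    ((∀ n ≤ k, 0 ≤ (x : ℤ) + ∑ i ∈ Finset.range n, w (p i) (p (i + 1))) ∧
      ∀ n₁ n₂ : ℕ, n₁ < n₂ → n₂ ≤ k →
        -(b : ℤ) ≤ ∑ i ∈ Finset.Ico n₁ n₂, w (p i) (p (i + 1)))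

-- list lemmas
lemma getLast?_cons_of {α : Type*} (a u : α) (l : List α) (h : l.getLast? = some u) :
    (a :: l).getLast? = some u := by
  cases l with
  | nil => simp at h
  | cons b t => rw [List.getLast?_cons_cons]; exact h

lemma ofFn_succ_head {α : Type*} (p : ℕ → α) (n : ℕ) :
    List.ofFn (fun j : Fin (n + 1) => p j) = p 0 :: List.ofFn (fun j : Fin n => p (j + 1)) := by
  rw [List.ofFn_succ]
  simp [Fin.val_succ]

lemma ofFn_one {α : Type*} (p : ℕ → α) :
    List.ofFn (fun j : Fin 1 => p j) = [p 0] := by simp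

lemma getLast?_ofFn' {α : Type*} (p : ℕ → α) (n : ℕ) :
    (List.ofFn (fun j : Fin (n + 1) => p j)).getLast? = some (p n) := by
  rw [List.ofFn_succ']
  simp

-- default strategy
noncomputable def sigma0 (v0 : V) : List V → V :=
  fun l => match l.getLast? with
  | some u => Classical.choose (hE u)
  | none => v0

lemma sigma0_edgeOK (v0 : V) : EdgeOK E VMax (sigma0 E hE v0) := by
  intro l u h _
  have : sigma0 E hE v0 l = Classical.choose (hE u) := by
    simp [sigma0, h]
  rw [this]
  exact Classical.choose_spec (hE u)

-- canonical play
noncomputable def nextv (σ : List V → V) (v0 : V) (l : List V) : V :=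
  match l.getLast? with
  | some u => if u ∈ VMax then σ l else Classical.choose (hE u)
  | none => v0

noncomputable def hist (σ : List V → V) (v : V) : ℕ → List V :=
  fun i => Nat.rec [v] (fun _ l => l ++ [nextv E VMax hE σ v l]) i

lemma hist_zero (σ : List V → V) (v : V) : hist E VMax hE σ v 0 = [v] := rfl

lemma hist_succ (σ : List V → V) (v : V) (i : ℕ) :
    hist E VMax hE σ v (i + 1) = hist E VMax hE σ v i ++ [nextv E VMax hE σ v (hist E VMax hE σ v i)] := rfl

noncomputable def cplay (σ : List V → V) (v : V) (i : ℕ) : V :=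
  ((hist E VMax hE σ v i).getLast?).getD v

lemma cplay_zero (σ : List V → V) (v : V) : cplay E VMax hE σ v 0 = v := rfl

lemma hist_getLast (σ : List V → V) (v : V) (i : ℕ) :
    (hist E VMax hE σ v i).getLast? = some (cplay E VMax hE σ v i) := by
  cases i with
  | zero => rfl
  | succ j => rw [cplay, hist_succ]; simp

lemma cplay_succ (σ : List V → V) (v : V) (i : ℕ) :
    cplay E VMax hE σ v (i + 1) =
      if cplay E VMax hE σ v i ∈ VMax then σ (hist E VMax hE σ v i)
      else Classical.choose (hE (cplay E VMax hE σ v i)) := by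
  have h := hist_getLast E VMax hE σ v i
  have h2 : cplay E VMax hE σ v (i+1) = nextv E VMax hE σ v (hist E VMax hE σ v i) := by
    rw [cplay, hist_succ]; simp
  rw [h2, nextv, h]

lemma hist_eq_ofFn (σ : List V → V) (v : V) (i : ℕ) :
    hist E VMax hE σ v i = List.ofFn (fun j : Fin (i + 1) => cplay E VMax hE σ v j) := by
  induction i with
  | zero => rw [hist_zero]; simp [cplay_zero]
  | succ j ih =>
    rw [List.ofFn_succ']
    have h1 : (fun jj : Fin (j + 1) => cplay E VMax hE σ v ((jj.castSucc : Fin (j+2)) : ℕ))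
        = fun jj : Fin (j+1) => cplay E VMax hE σ v jj := by
      funext jj; simp
    have h2 : cplay E VMax hE σ v (j+1) = nextv E VMax hE σ v (hist E VMax hE σ v j) := by
      rw [cplay, hist_succ]; simp
    rw [hist_succ, List.concat_eq_append, h1, ← ih, ← h2]
    simp [Fin.val_last]

lemma cplay_edge (σ : List V → V) (hedge : EdgeOK E VMax σ) (v : V) (i : ℕ) :
    E (cplay E VMax hE σ v i) (cplay E VMax hE σ v (i + 1)) := by
  rw [cplay_succ]
  split_ifs with h
  · exact hedge _ _ (hist_getLast E VMax hE σ v i) h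
  · exact Classical.choose_spec (hE _)

lemma cplay_consistent (σ : List V → V) (v : V) (i : ℕ)
    (h : cplay E VMax hE σ v i ∈ VMax) :
    cplay E VMax hE σ v (i + 1) = σ (List.ofFn (fun j : Fin (i + 1) => cplay E VMax hE σ v j)) := by
  rw [cplay_succ, if_pos h, hist_eq_ofFn]

-- part 2 (to be appended inside section)
def prep (v : V) (q : ℕ → V) : ℕ → V
  | 0 => v
  | i + 1 => q i

lemma prep_spec (σ : List V → V) (v u : V) (hvu : E v u) (hMax : v ∈ VMax → σ [v] = u)
    (k : ℕ) (q : ℕ → V) (hq0 : q 0 = u)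
    (hqe : ∀ i < k, E (q i) (q (i + 1)))
    (hqc : ∀ i < k, q i ∈ VMax → q (i + 1) = σ (v :: List.ofFn (fun j : Fin (i + 1) => q j))) :
    prep v q 0 = v ∧
    (∀ i < k + 1, E (prep v q i) (prep v q (i + 1))) ∧
    (∀ i < k + 1, prep v q i ∈ VMax →
      prep v q (i + 1) = σ (List.ofFn (fun j : Fin (i + 1) => prep v q j))) := by
  refine ⟨rfl, ?_, ?_⟩
  · intro i hi
    cases i with
    | zero => simpa [prep, hq0] using hvu
    | succ j => exact hqe j (by omega)
  · intro i hi hmem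
    cases i with
    | zero =>
      have hgoal : List.ofFn (fun j : Fin 1 => prep v q j) = [v] := by
        rw [ofFn_one (prep v q)]; rfl
      rw [hgoal, hMax hmem]
      exact hq0
    | succ j =>
      have h := hqc j (by omega) hmem
      have hgoal : List.ofFn (fun jj : Fin (j + 2) => prep v q jj)
          = v :: List.ofFn (fun jj : Fin (j + 1) => q jj) := by
        rw [ofFn_succ_head (prep v q) (j + 1)]; rfl
      rw [hgoal]
      exact h

lemma tail_spec (σ : List V → V) (τ : V → List V → V)
    (hσ : ∀ (a c : V) (l : List V), σ (a :: c :: l) = τ c (c :: l))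
    (k : ℕ) (p : ℕ → V)
    (hpe : ∀ i < k + 1, E (p i) (p (i + 1)))
    (hpc : ∀ i < k + 1, p i ∈ VMax →
      p (i + 1) = σ (List.ofFn (fun j : Fin (i + 1) => p j))) :
    (∀ i < k, E (p (i + 1)) (p (i + 2))) ∧
    (∀ i < k, p (i + 1) ∈ VMax →
      p (i + 2) = τ (p 1) (List.ofFn (fun j : Fin (i + 1) => p (j + 1)))) := by
  constructor
  · intro i hi; exact hpe (i + 1) (by omega)
  · intro i hi hmem
    have h := hpc (i + 1) (by omega) hmem
    rw [ofFn_succ_head] at h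
    have hL : List.ofFn (fun j : Fin (i + 1) => p (j + 1))
        = p 1 :: List.ofFn (fun j : Fin i => p (j + 1 + 1)) := by
      rw [ofFn_succ_head (fun n => p (n + 1))]
    rw [hL, hσ, ← hL] at h
    exact h

lemma sum_range_shift (p : ℕ → V) (n : ℕ) :
    ∑ i ∈ Finset.range (n + 1), w (p i) (p (i + 1))
      = w (p 0) (p 1) + ∑ i ∈ Finset.range n, w (p (i + 1)) (p (i + 2)) := by
  rw [Finset.sum_range_succ' (fun i => w (p i) (p (i + 1))) n]
  ring

lemma sum_Ico_shift (p : ℕ → V) (n₁ n₂ : ℕ) :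
    ∑ i ∈ Finset.Ico (n₁ + 1) (n₂ + 1), w (p i) (p (i + 1))
      = ∑ i ∈ Finset.Ico n₁ n₂, w (p (i + 1)) (p (i + 2)) := by
  rw [Finset.sum_Ico_eq_sum_range, Finset.sum_Ico_eq_sum_range]
  have h : n₂ + 1 - (n₁ + 1) = n₂ - n₁ := by omega
  rw [h]
  refine Finset.sum_congr rfl fun i _ => ?_
  have h1 : n₁ + 1 + i = n₁ + i + 1 := by omega
  rw [h1]

-- sums along a prepended play
lemma prep_sum_range (v : V) (q : ℕ → V) (n : ℕ) :
    ∑ i ∈ Finset.range (n + 1), w (prep v q i) (prep v q (i + 1))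
      = w v (q 0) + ∑ i ∈ Finset.range n, w (q i) (q (i + 1)) := by
  rw [sum_range_shift w (prep v q) n]
  rfl

lemma prep_sum_Ico (v : V) (q : ℕ → V) (n₁ n₂ : ℕ) :
    ∑ i ∈ Finset.Ico (n₁ + 1) (n₂ + 1), w (prep v q i) (prep v q (i + 1))
      = ∑ i ∈ Finset.Ico n₁ n₂, w (q i) (q (i + 1)) := by
  rw [sum_Ico_shift w (prep v q) n₁ n₂]
  rfl

-- part 3: WithTop / viStep lemmas
lemma coe_term (m : ℕ) (c : ℤ) :
    max 0 (((m : ℤ) : WithTop ℤ) + ((c : ℤ) : WithTop ℤ))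
      = ((max 0 ((m : ℤ) + c) : ℤ) : WithTop ℤ) := by
  rw [← WithTop.coe_add, ← WithTop.coe_zero, ← WithTop.coe_max]

lemma term_cases (d : WithTop ℤ) (c : ℤ)
    (hd : d = ⊤ ∨ ∃ m : ℕ, d = ((m : ℤ) : WithTop ℤ)) :
    max 0 (d + (c : WithTop ℤ)) = ⊤ ∨
      ∃ m : ℕ, max 0 (d + (c : WithTop ℤ)) = ((m : ℤ) : WithTop ℤ) := by
  rcases hd with h | ⟨m, h⟩
  · left; rw [h]; simp
  · right
    refine ⟨(max 0 ((m : ℤ) + c)).toNat, ?_⟩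
    rw [h, coe_term]
    congr 1
    rw [Int.toNat_of_nonneg (le_max_left _ _)]

lemma term_le (dd : WithTop ℤ) (c x : ℤ)
    (hd : dd = ⊤ ∨ ∃ m : ℕ, dd = ((m : ℤ) : WithTop ℤ))
    (h : max 0 (dd + (c : WithTop ℤ)) ≤ ((x : ℤ) : WithTop ℤ)) :
    ∃ m : ℕ, dd = ((m : ℤ) : WithTop ℤ) ∧ (m : ℤ) + c ≤ x := by
  rcases hd with htop | ⟨m, hm⟩
  · rw [htop] at h; simp at h
  · refine ⟨m, hm, ?_⟩
    rw [hm, coe_term, WithTop.coe_le_coe] at h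
    exact le_trans (le_max_right _ _) h

lemma viStep_le_of (d : V → WithTop ℤ) (v : V) (c : ℤ)
    (hmax : v ∈ VMax → ∃ u, E v u ∧
      max 0 (d u + ((-(w v u) : ℤ) : WithTop ℤ)) ≤ ((c : ℤ) : WithTop ℤ) ∧
      max 0 (d u + ((-(w v u) : ℤ) : WithTop ℤ)) ≤ (((b : ℕ) : ℤ) : WithTop ℤ))
    (hmin : v ∉ VMax → ∀ u, E v u →
      max 0 (d u + ((-(w v u) : ℤ) : WithTop ℤ)) ≤ ((c : ℤ) : WithTop ℤ) ∧
      max 0 (d u + ((-(w v u) : ℤ) : WithTop ℤ)) ≤ (((b : ℕ) : ℤ) : WithTop ℤ)) :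
    viStep E w b VMax hE d v ≤ ((c : ℤ) : WithTop ℤ) := by
  unfold viStep
  dsimp only
  by_cases hv : v ∈ VMax
  · obtain ⟨u, hu, h1, h2⟩ := hmax hv
    have hus : u ∈ Finset.univ.filter (fun u => E v u) := by simp [hu]
    rw [if_pos hv]
    have hinf : ∀ (H : (Finset.univ.filter (fun u => E v u)).Nonempty),
        (Finset.univ.filter (fun u => E v u)).inf' H
          (fun u => max 0 (d u + ((-(w v u) : ℤ) : WithTop ℤ)))
          ≤ max 0 (d u + ((-(w v u) : ℤ) : WithTop ℤ)) :=
      fun _ => Finset.inf'_le _ hus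
    rw [if_pos (le_trans (hinf _) h2)]
    exact le_trans (hinf _) h1
  · rw [if_neg hv]
    have hsup1 : ∀ u ∈ Finset.univ.filter (fun u => E v u),
        max 0 (d u + ((-(w v u) : ℤ) : WithTop ℤ)) ≤ ((c : ℤ) : WithTop ℤ) := by
      intro u hu
      exact (hmin hv u (by simpa using hu)).1
    have hsup2 : ∀ u ∈ Finset.univ.filter (fun u => E v u),
        max 0 (d u + ((-(w v u) : ℤ) : WithTop ℤ)) ≤ (((b : ℕ) : ℤ) : WithTop ℤ) := by
      intro u hu
      exact (hmin hv u (by simpa using hu)).2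
    rw [if_pos (Finset.sup'_le _ _ hsup2)]
    exact Finset.sup'_le _ _ hsup1

-- part 4
lemma viStep_finite_max (d : V → WithTop ℤ) (v : V) (m : ℕ) (hv : v ∈ VMax)
    (h : viStep E w b VMax hE d v = ((m : ℤ) : WithTop ℤ)) :
    (m : ℤ) ≤ (b : ℤ) ∧ ∃ u, E v u ∧
      max 0 (d u + ((-(w v u) : ℤ) : WithTop ℤ)) = ((m : ℤ) : WithTop ℤ) := by
  unfold viStep at h
  dsimp only at h
  rw [if_pos hv] at h
  split_ifs at h with hb
  · rw [h] at hb
    refine ⟨WithTop.coe_le_coe.mp hb, ?_⟩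
    obtain ⟨u, hus, hu⟩ := Finset.exists_mem_eq_inf'
      (by obtain ⟨u', hu'⟩ := hE v; exact ⟨u', by simp [hu']⟩ :
        (Finset.univ.filter (fun u => E v u)).Nonempty)
      (fun u => max 0 (d u + ((-(w v u) : ℤ) : WithTop ℤ)))
    refine ⟨u, by simpa using hus, ?_⟩
    rw [← hu]
    exact h.symm ▸ h ▸ rfl
  · exact absurd h.symm (by simp)

lemma viStep_finite_min (d : V → WithTop ℤ) (v : V) (m : ℕ) (hv : v ∉ VMax)
    (h : viStep E w b VMax hE d v = ((m : ℤ) : WithTop ℤ)) :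
    (m : ℤ) ≤ (b : ℤ) ∧ ∀ u, E v u →
      max 0 (d u + ((-(w v u) : ℤ) : WithTop ℤ)) ≤ ((m : ℤ) : WithTop ℤ) := by
  unfold viStep at h
  dsimp only at h
  rw [if_neg hv] at h
  split_ifs at h with hb
  · rw [h] at hb
    refine ⟨WithTop.coe_le_coe.mp hb, ?_⟩
    intro u hu
    rw [← h]
    exact Finset.le_sup' (fun u => max 0 (d u + ((-(w v u) : ℤ) : WithTop ℤ)))
      (by simp [hu] : u ∈ Finset.univ.filter (fun u => E v u))
  · exact absurd h.symm (by simp)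

lemma viStep_cases (d : V → WithTop ℤ) (v : V)
    (hd : ∀ u, d u = ⊤ ∨ ∃ m : ℕ, d u = ((m : ℤ) : WithTop ℤ)) :
    viStep E w b VMax hE d v = ⊤ ∨
      ∃ m : ℕ, viStep E w b VMax hE d v = ((m : ℤ) : WithTop ℤ) := by
  unfold viStep
  dsimp only
  split_ifs with hv hb hb
  · obtain ⟨u, hus, hu⟩ := Finset.exists_mem_eq_inf'
      (by obtain ⟨u', hu'⟩ := hE v; exact ⟨u', by simp [hu']⟩ :
        (Finset.univ.filter (fun u => E v u)).Nonempty)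
      (fun u => max 0 (d u + ((-(w v u) : ℤ) : WithTop ℤ)))
    rw [hu]
    exact term_cases (d u) (-(w v u)) (hd u)
  · exact Or.inl rfl
  · obtain ⟨u, hus, hu⟩ := Finset.exists_mem_eq_sup'
      (by obtain ⟨u', hu'⟩ := hE v; exact ⟨u', by simp [hu']⟩ :
        (Finset.univ.filter (fun u => E v u)).Nonempty)
      (fun u => max 0 (d u + ((-(w v u) : ℤ) : WithTop ℤ)))
    rw [hu]
    exact term_cases (d u) (-(w v u)) (hd u)
  · exact Or.inl rfl

lemma viSeq_succ (k : ℕ) :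
    viSeq E w b VMax hE (k + 1) = viStep E w b VMax hE (viSeq E w b VMax hE k) := rfl

lemma viSeq_cases (k : ℕ) (v : V) :
    viSeq E w b VMax hE k v = ⊤ ∨
      ∃ m : ℕ, viSeq E w b VMax hE k v = ((m : ℤ) : WithTop ℤ) := by
  cases k with
  | zero => exact Or.inr ⟨0, by norm_num [viSeq]⟩
  | succ k =>
    rw [viSeq_succ]
    exact viStep_cases E w b VMax hE _ v (viSeq_cases k)

-- part 5: builder + ensure_build
noncomputable def buildStrat (v0 : V) (f1 : V → V) (τ : V → List V → V) : List V → V :=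
  fun l => match l with
  | [] => v0
  | [a] => f1 a
  | _ :: c :: l' => τ c (c :: l')

lemma buildStrat_edgeOK (v0 : V) (f1 : V → V) (τ : V → List V → V)
    (hf1 : ∀ a, a ∈ VMax → E a (f1 a)) (hτ : ∀ u, EdgeOK E VMax (τ u)) :
    EdgeOK E VMax (buildStrat v0 f1 τ) := by
  intro l u hlast hmem
  match l with
  | [] => simp at hlast
  | [a] =>
    simp only [List.getLast?_singleton, Option.some.injEq] at hlast
    subst hlast
    exact hf1 _ hmem
  | a :: c :: l' =>
    have h2 : (c :: l').getLast? = some u := by rwa [List.getLast?_cons_cons] at hlast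
    exact hτ c (c :: l') u h2 hmem

lemma ensure_build (k : ℕ) (v : V) (x : ℕ) (hxb : (x : ℤ) ≤ (b : ℤ))
    (f1 : V → V) (τ : V → List V → V)
    (hstep : ∀ u, E v u → (v ∈ VMax → u = f1 v) →
      ∃ m : ℕ, (m : ℤ) ≤ (x : ℤ) + w v u ∧ Ensure E w b VMax (τ u) k u m) :
    Ensure E w b VMax (buildStrat v f1 τ) (k + 1) v x := by
  intro p hp0 hpe hpc
  have hvp1 : E v (p 1) := by have h := hpe 0 (by omega); rwa [hp0] at h
  have hcond : v ∈ VMax → p 1 = f1 v := by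
    intro hv
    have h := hpc 0 (by omega) (by rwa [hp0])
    rw [ofFn_one, hp0] at h
    exact h
  obtain ⟨m, hm, hens⟩ := hstep (p 1) hvp1 (fun hv => hcond hv)
  have htail := tail_spec E VMax (buildStrat v f1 τ) τ (fun a c l => rfl) k p hpe hpc
  obtain ⟨hq1, hq2⟩ := hens (fun i => p (i + 1)) rfl htail.1 htail.2
  constructor
  · intro n hn
    cases n with
    | zero => simpa using Int.natCast_nonneg x
    | succ j =>
      rw [sum_range_shift, hp0]
      have h1 : 0 ≤ (m : ℤ) + ∑ i ∈ Finset.range j, w (p (i + 1)) (p (i + 2)) :=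
        hq1 j (by omega)
      linarith
  · intro n₁ n₂ h12 h2k
    cases n₂ with
    | zero => exact absurd h12 (Nat.not_lt_zero n₁)
    | succ j2 =>
      cases n₁ with
      | zero =>
        rw [← Finset.range_eq_Ico, sum_range_shift, hp0]
        have h1 : 0 ≤ (m : ℤ) + ∑ i ∈ Finset.range j2, w (p (i + 1)) (p (i + 2)) :=
          hq1 j2 (by omega)
        linarith
      | succ j1 =>
        rw [sum_Ico_shift]
        exact hq2 j1 j2 (by omega) (by omega)

-- part 6: main induction
lemma vi_main (k : ℕ) : ∀ v : V,
    (∀ m : ℕ, viSeq E w b VMax hE k v = ((m : ℤ) : WithTop ℤ) →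
      EnsuresSteps E w b VMax k v m) ∧
    (∀ y : ℕ, EnsuresSteps E w b VMax k v y →
      viSeq E w b VMax hE k v ≤ ((y : ℤ) : WithTop ℤ)) := by
  induction k with
  | zero =>
    intro v
    constructor
    · intro m _
      refine ⟨sigma0 E hE v, sigma0_edgeOK E VMax hE v, ?_⟩
      intro p hp0 hpe hpc
      constructor
      · intro n hn
        have hn0 : n = 0 := by omega
        subst hn0
        simpa using Int.natCast_nonneg m
      · intro n₁ n₂ h12 h2k
        exact absurd (lt_of_lt_of_le h12 h2k) (Nat.not_lt_zero n₁)
    · intro y _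
      show (0 : WithTop ℤ) ≤ ((y : ℤ) : WithTop ℤ)
      rw [← WithTop.coe_zero, WithTop.coe_le_coe]
      exact Int.natCast_nonneg y
  | succ k IH =>
    intro v
    constructor
    · -- (a) achievability
      intro x hfin
      rw [viSeq_succ] at hfin
      by_cases hv : v ∈ VMax
      · obtain ⟨hxb, u, hvu, hterm⟩ := viStep_finite_max E w b VMax hE _ v x hv hfin
        obtain ⟨m, hdu, hm⟩ := term_le (viSeq E w b VMax hE k u) (-(w v u)) x
          (viSeq_cases E w b VMax hE k u) (le_of_eq hterm)
        obtain ⟨τ, hτe, hτ⟩ := (IH u).1 m hdu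
        refine ⟨buildStrat v (fun a => if a = v then u else sigma0 E hE v [a])
          (fun c => if c = u then τ else sigma0 E hE v), ?_, ?_⟩
        · apply buildStrat_edgeOK
          · intro a ha
            by_cases hav : a = v
            · subst hav; rw [if_pos rfl]; exact hvu
            · rw [if_neg hav]
              exact sigma0_edgeOK E VMax hE v [a] a (by simp) ha
          · intro c
            by_cases hcu : c = u
            · intro l u' h1 h2
              simp only [if_pos hcu]
              exact hτe l u' h1 h2
            · intro l u' h1 h2
              simp only [if_neg hcu]
              exact sigma0_edgeOK E VMax hE v l u' h1 h2
        · apply ensure_build E w b VMax k v x hxb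
          intro u' hvu' hcond
          have hu'f : u' = u := by simpa using hcond hv
          subst hu'f
          refine ⟨m, by linarith, ?_⟩
          simpa only [if_pos rfl, if_true, Ensure] using hτ
      · obtain ⟨hxb, hall⟩ := viStep_finite_min E w b VMax hE _ v x hv hfin
        have hch : ∀ u : V, ∃ τu : List V → V, EdgeOK E VMax τu ∧
            (E v u → ∃ m : ℕ, (m : ℤ) ≤ (x : ℤ) + w v u ∧ Ensure E w b VMax τu k u m) := by
          intro u
          by_cases hu : E v u
          · obtain ⟨m, hdu, hm⟩ := term_le (viSeq E w b VMax hE k u) (-(w v u)) x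
              (viSeq_cases E w b VMax hE k u) (hall u hu)
            obtain ⟨τu, hτe, hτ⟩ := (IH u).1 m hdu
            exact ⟨τu, hτe, fun _ => ⟨m, by linarith, hτ⟩⟩
          · exact ⟨sigma0 E hE v, sigma0_edgeOK E VMax hE v, fun h => absurd h hu⟩
        choose τ hτe hτm using hch
        refine ⟨buildStrat v (fun a => sigma0 E hE v [a]) τ, ?_, ?_⟩
        · apply buildStrat_edgeOK
          · intro a ha
            exact sigma0_edgeOK E VMax hE v [a] a (by simp) ha
          · exact hτe
        · apply ensure_build E w b VMax k v x hxb
          intro u hu _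
          exact hτm u hu
    · -- (b) optimality
      intro y hy
      obtain ⟨σ, hσe, hσ⟩ := hy
      rw [viSeq_succ]
      have key : ∀ u, E v u → (v ∈ VMax → σ [v] = u) →
          max 0 (viSeq E w b VMax hE k u + ((-(w v u) : ℤ) : WithTop ℤ)) ≤ ((y : ℤ) : WithTop ℤ) ∧
          max 0 (viSeq E w b VMax hE k u + ((-(w v u) : ℤ) : WithTop ℤ)) ≤ (((b : ℕ) : ℤ) : WithTop ℤ) := by
        intro u hvu hMaxu
        set σ' : List V → V := fun l => σ (v :: l) with hσ'def
        have hσ'e : EdgeOK E VMax σ' := by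
          intro l u' hlast hmem
          exact hσe (v :: l) u' (getLast?_cons_of v u' l hlast) hmem
        have hplay : ∀ q'' : ℕ → V, q'' 0 = u → (∀ i < k, E (q'' i) (q'' (i + 1))) →
            (∀ i < k, q'' i ∈ VMax →
              q'' (i + 1) = σ' (List.ofFn (fun j : Fin (i + 1) => q'' j))) →
            ((∀ n ≤ k + 1, 0 ≤ (y : ℤ) +
                ∑ i ∈ Finset.range n, w (prep v q'' i) (prep v q'' (i + 1))) ∧
             (∀ n₁ n₂ : ℕ, n₁ < n₂ → n₂ ≤ k + 1 →
                -(b : ℤ) ≤ ∑ i ∈ Finset.Ico n₁ n₂, w (prep v q'' i) (prep v q'' (i + 1)))) := by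
          intro q'' h0 he hc
          have hps := prep_spec E VMax σ v u hvu (fun hvm => hMaxu hvm) k q'' h0 he hc
          exact hσ (prep v q'') hps.1 hps.2.1 hps.2.2
        have hq0 : cplay E VMax hE σ' u 0 = u := cplay_zero E VMax hE σ' u
        have hcan := hplay (cplay E VMax hE σ' u) hq0
          (fun i _ => cplay_edge E VMax hE σ' hσ'e u i)
          (fun i _ h => cplay_consistent E VMax hE σ' u i h)
        have hyw : 0 ≤ (y : ℤ) + w v u := by
          have h1 : 0 ≤ (y : ℤ) + ∑ i ∈ Finset.range 1,
              w (prep v (cplay E VMax hE σ' u) i) (prep v (cplay E VMax hE σ' u) (i + 1)) :=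
            hcan.1 1 (by omega)
          rw [Finset.sum_range_one] at h1
          have h1' : 0 ≤ (y : ℤ) + w v (cplay E VMax hE σ' u 0) := h1
          rwa [hq0] at h1'
        have hbw : -(b : ℤ) ≤ w v u := by
          have h2 : -(b : ℤ) ≤ ∑ i ∈ Finset.Ico 0 1,
              w (prep v (cplay E VMax hE σ' u) i) (prep v (cplay E VMax hE σ' u) (i + 1)) :=
            hcan.2 0 1 (by omega) (by omega)
          rw [← Finset.range_eq_Ico, Finset.sum_range_one] at h2
          have h2' : -(b : ℤ) ≤ w v (cplay E VMax hE σ' u 0) := h2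
          rwa [hq0] at h2'
        set m : ℕ := ((y : ℤ) + w v u).toNat with hmdef
        have hmz : (m : ℤ) = (y : ℤ) + w v u := Int.toNat_of_nonneg hyw
        have hens : Ensure E w b VMax σ' k u m := by
          intro q'' h0 he hc
          have H := hplay q'' h0 he hc
          constructor
          · intro n hn
            have h1 : 0 ≤ (y : ℤ) + ∑ i ∈ Finset.range (n + 1),
                w (prep v q'' i) (prep v q'' (i + 1)) := H.1 (n + 1) (by omega)
            rw [prep_sum_range, h0] at h1
            rw [hmz]
            linarith
          · intro n₁ n₂ h12 h2k
            have h2 : -(b : ℤ) ≤ ∑ i ∈ Finset.Ico (n₁ + 1) (n₂ + 1),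
                w (prep v q'' i) (prep v q'' (i + 1)) := H.2 (n₁ + 1) (n₂ + 1) (by omega) (by omega)
            rwa [prep_sum_Ico] at h2
        have hle := (IH u).2 m ⟨σ', hσ'e, hens⟩
        obtain ⟨m₀, hdu, hm₀y⟩ : ∃ m₀ : ℕ,
            viSeq E w b VMax hE k u = ((m₀ : ℤ) : WithTop ℤ) ∧ (m₀ : ℤ) ≤ (y : ℤ) + w v u := by
          rcases viSeq_cases E w b VMax hE k u with htop | ⟨m₀, hm₀⟩
          · rw [htop] at hle
            exact absurd hle (by simp)
          · refine ⟨m₀, hm₀, ?_⟩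
            rw [hm₀, WithTop.coe_le_coe] at hle
            have hmm : (m₀ : ℤ) ≤ (m : ℤ) := hle
            linarith
        have hm₀b : (m₀ : ℤ) - w v u ≤ (b : ℤ) := by
          by_contra hgt
          push_neg at hgt
          rcases m₀ with _ | m₁
          · push_cast at hgt
            linarith
          · have hnot : ¬ EnsuresSteps E w b VMax k u m₁ := by
              intro hcon
              have hle2 := (IH u).2 m₁ hcon
              rw [hdu, WithTop.coe_le_coe] at hle2
              have hcontra : (m₁ + 1 : ℕ) ≤ m₁ := by exact_mod_cast hle2
              omega
            have hnot2 : ¬ Ensure E w b VMax σ' k u m₁ := fun hcon => hnot ⟨σ', hσ'e, hcon⟩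
            unfold Ensure at hnot2
            push_neg at hnot2
            obtain ⟨q'', h0, he, hc, hbad⟩ := hnot2
            have H := hplay q'' h0 he hc
            by_cases hA : ∀ n ≤ k, 0 ≤ (m₁ : ℤ) +
                ∑ i ∈ Finset.range n, w (q'' i) (q'' (i + 1))
            · obtain ⟨n₁, n₂, h12, h2k, hseg⟩ := hbad hA
              have h2 : -(b : ℤ) ≤ ∑ i ∈ Finset.Ico (n₁ + 1) (n₂ + 1),
                  w (prep v q'' i) (prep v q'' (i + 1)) := H.2 (n₁ + 1) (n₂ + 1) (by omega) (by omega)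
              rw [prep_sum_Ico] at h2
              linarith
            · push_neg at hA
              obtain ⟨n, hnk, hpref⟩ := hA
              have h2 : -(b : ℤ) ≤ ∑ i ∈ Finset.Ico 0 (n + 1),
                  w (prep v q'' i) (prep v q'' (i + 1)) := H.2 0 (n + 1) (by omega) (by omega)
              rw [← Finset.range_eq_Ico, prep_sum_range, h0] at h2
              push_cast at hpref hgt
              linarith
        rw [hdu, coe_term]
        constructor
        · rw [WithTop.coe_le_coe]
          exact max_le (Int.natCast_nonneg y) (by linarith)
        · rw [WithTop.coe_le_coe]
          exact max_le (Int.natCast_nonneg b) (by linarith)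
      by_cases hv : v ∈ VMax
      · have hvu : E v (σ [v]) := hσe [v] v (by simp) hv
        exact viStep_le_of E w b VMax hE _ v (y : ℤ)
          (fun _ => ⟨σ [v], hvu, key (σ [v]) hvu (fun _ => rfl)⟩)
          (fun h => absurd hv h)
      · exact viStep_le_of E w b VMax hE _ v (y : ℤ)
          (fun h => absurd h hv)
          (fun _ u hu => key u hu (fun h => absurd h hv))

end MPGAux

/-- whenever `d_k(v)` is finite, it is the minimum initial energy
with which Max can ensure the `k`-step energy condition from `v`. -/
theorem stmt_13 {V : Type*} [Fintype V] [DecidableEq V]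
    (E : V → V → Prop) [DecidableRel E] (w : V → V → ℤ) (b : ℕ)
    (VMax : Finset V) (hE : ∀ v : V, ∃ u, E v u)
    (k : ℕ) (v : V) (x : ℕ)
    (hfin : viSeq E w b VMax hE k v = ((x : ℤ) : WithTop ℤ)) :
    IsLeast {y : ℕ | EnsuresSteps E w b VMax k v y} x := by
  have H := vi_main E w b VMax hE k v
  constructor
  · exact H.1 x hfin
  · intro y hy
    have hle := H.2 y hy
    rw [hfin, WithTop.coe_le_coe] at hle
    exact_mod_cast hle
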